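/- Consider an LTV system on an open interval I ⊆ ℝ with coefficients A, B, C, D, let V : I × ℂ^n → ℝ be a storage function for this system, let t0 ∈ I, and let X be a fundamental solution matrix for A anchored at t0. Then: (1) for every x0 ∈ ℂ^n and all r ≤ s in I, V(s, X(s)x0) ≤ V(r, X(r)x0); (2) if moreover V = V_Q for some Q : I → ℂ^{n×n} pointwise Hermitian positive semidefinite, then the pointwise Hermitian positive semidefinite matrix function Q^X : I → ℂ^{n×n}, Q^X(t) = X(t)* Q(t) X(t), is weakly decreasing. -/

import Mathlib

open MeasureTheory Matrix Set Filter Topology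
open scoped ComplexOrder ENNReal

namespace Paper

/-- Loewner order `M ≤ N`, i.e. `N - M` is positive semidefinite. -/
def LoewnerLE {n : ℕ} (M N : Matrix (Fin n) (Fin n) ℂ) : Prop := (N - M).PosSemidef

/-- Entrywise (Bochner) interval integral of a matrix-valued function. -/
noncomputable def matInt {k l : ℕ} (G : ℝ → Matrix (Fin k) (Fin l) ℂ) (r s : ℝ) :
    Matrix (Fin k) (Fin l) ℂ :=
  Matrix.of fun i j => ∫ t in r..s, G t i j

/-- `Q` is absolutely upper semicontinuous on `[a,b]`: there is a Bochner-integrable,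
pointwise Hermitian `G` with `Q s - Q r ≤ ∫_r^s G` in the Loewner order. -/
def IsAUCOn {n : ℕ} (Q : ℝ → Matrix (Fin n) (Fin n) ℂ) (a b : ℝ) : Prop :=
  ∃ G : ℝ → Matrix (Fin n) (Fin n) ℂ,
    (∀ t, (G t).IsHermitian) ∧
    (∀ i j, IntegrableOn (fun t => G t i j) (Icc a b)) ∧
    ∀ r s : ℝ, a ≤ r → r ≤ s → s ≤ b → LoewnerLE (Q s - Q r) (matInt G r s)

/-- A matrix-valued function is locally `L^p` on `I` (entrywise, on compact subintervals). -/
def MemLocLp {k l : ℕ} (p : ℝ≥0∞) (I : Set ℝ) (F : ℝ → Matrix (Fin k) (Fin l) ℂ) : Prop :=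
  ∀ a b : ℝ, a ∈ I → b ∈ I → ∀ i j, MemLp (fun t => F t i j) p (volume.restrict (Icc a b))

/-- A vector-valued function is locally `L^p` on `I`. -/
def VecMemLocLp {k : ℕ} (p : ℝ≥0∞) (I : Set ℝ) (f : ℝ → Fin k → ℂ) : Prop :=
  ∀ a b : ℝ, a ∈ I → b ∈ I → ∀ i, MemLp (fun t => f t i) p (volume.restrict (Icc a b))

/-- `x` is locally absolutely continuous on `I` with (a.e.) derivative `x'`. -/
def VecLocAC {k : ℕ} (I : Set ℝ) (x x' : ℝ → Fin k → ℂ) : Prop :=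
  (∀ a b : ℝ, a ∈ I → b ∈ I → ∀ i, IntegrableOn (fun t => x' t i) (Icc a b)) ∧
  ∀ s t : ℝ, s ∈ I → t ∈ I → ∀ i, x t i = x s i + ∫ τ in s..t, x' τ i

/-- A matrix function is locally absolutely continuous on `I` with (a.e.) derivative `X'`. -/
def MatLocAC {k l : ℕ} (I : Set ℝ) (X X' : ℝ → Matrix (Fin k) (Fin l) ℂ) : Prop :=
  (∀ a b : ℝ, a ∈ I → b ∈ I → ∀ i j, IntegrableOn (fun t => X' t i j) (Icc a b)) ∧
  ∀ s t : ℝ, s ∈ I → t ∈ I → ∀ i j, X t i j = X s i j + ∫ τ in s..t, X' τ i j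

/-- The coefficients of an LTV system lie in the appropriate local Lebesgue spaces. -/
def IsLTV {n m : ℕ} (I : Set ℝ)
    (A : ℝ → Matrix (Fin n) (Fin n) ℂ) (B : ℝ → Matrix (Fin n) (Fin m) ℂ)
    (C : ℝ → Matrix (Fin m) (Fin n) ℂ) (D : ℝ → Matrix (Fin m) (Fin m) ℂ) : Prop :=
  MemLocLp 1 I A ∧ MemLocLp 2 I B ∧ MemLocLp 2 I C ∧ MemLocLp ⊤ I D

/-- `(x, u, y)` is a state-input-output solution of the LTV system on `I`. -/
def IsSIOSol {n m : ℕ} (I : Set ℝ)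
    (A : ℝ → Matrix (Fin n) (Fin n) ℂ) (B : ℝ → Matrix (Fin n) (Fin m) ℂ)
    (C : ℝ → Matrix (Fin m) (Fin n) ℂ) (D : ℝ → Matrix (Fin m) (Fin m) ℂ)
    (x : ℝ → Fin n → ℂ) (u y : ℝ → Fin m → ℂ) : Prop :=
  VecMemLocLp 2 I u ∧ VecMemLocLp 2 I y ∧
  (∃ x', VecLocAC I x x' ∧ ∀ᵐ t ∂volume, t ∈ I → x' t = A t *ᵥ x t + B t *ᵥ u t) ∧
  ∀ᵐ t ∂volume, t ∈ I → y t = C t *ᵥ x t + D t *ᵥ u t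

/-- The supplied energy `∫_{t0}^{t1} Re (y(t)^* u(t)) dt`. -/
noncomputable def supply {k : ℕ} (u y : ℝ → Fin k → ℂ) (t0 t1 : ℝ) : ℝ :=
  ∫ t in t0..t1, (star (y t) ⬝ᵥ u t).re

/-- `V` is a storage function for the LTV system on `I`. -/
def IsStorage {n m : ℕ} (I : Set ℝ)
    (A : ℝ → Matrix (Fin n) (Fin n) ℂ) (B : ℝ → Matrix (Fin n) (Fin m) ℂ)
    (C : ℝ → Matrix (Fin m) (Fin n) ℂ) (D : ℝ → Matrix (Fin m) (Fin m) ℂ)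
    (V : ℝ → (Fin n → ℂ) → ℝ) : Prop :=
  (∀ t ∈ I, ∀ x, 0 ≤ V t x) ∧ (∀ t ∈ I, V t 0 = 0) ∧
  ∀ x u y, IsSIOSol I A B C D x u y → ∀ t0 t1 : ℝ, t0 ∈ I → t1 ∈ I → t0 ≤ t1 →
    V t1 (x t1) - V t0 (x t0) ≤ supply u y t0 t1

/-- The quadratic storage function candidate `V_Q(t, x) = ½ x^* Q(t) x`. -/
noncomputable def quadStorage {k : ℕ} (Q : ℝ → Matrix (Fin k) (Fin k) ℂ) :
    ℝ → (Fin k → ℂ) → ℝ :=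
  fun t x => (1 / 2 : ℝ) * (star x ⬝ᵥ (Q t *ᵥ x)).re

/-- `X` is a fundamental solution matrix for `A` anchored at `t0`. -/
def IsFundamental {n : ℕ} (I : Set ℝ) (A : ℝ → Matrix (Fin n) (Fin n) ℂ) (t0 : ℝ)
    (X : ℝ → Matrix (Fin n) (Fin n) ℂ) : Prop :=
  t0 ∈ I ∧ X t0 = 1 ∧ (∀ t ∈ I, IsUnit (X t)) ∧
  ∃ X', MatLocAC I X X' ∧ ∀ᵐ t ∂volume, t ∈ I → X' t = A t * X t

/-- The supply set whose supremum is the available storage `V_a(t0, x0)`. -/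
def supplySet {n m : ℕ} (I : Set ℝ)
    (A : ℝ → Matrix (Fin n) (Fin n) ℂ) (B : ℝ → Matrix (Fin n) (Fin m) ℂ)
    (C : ℝ → Matrix (Fin m) (Fin n) ℂ) (D : ℝ → Matrix (Fin m) (Fin m) ℂ)
    (t0 : ℝ) (x0 : Fin n → ℂ) : Set ℝ :=
  { c | ∃ t1 x u y, t1 ∈ I ∧ t0 ≤ t1 ∧ IsSIOSol I A B C D x u y ∧ x t0 = x0 ∧
      c = -(supply u y t0 t1) }

/-- Null space decomposition structure: `M i j = 0` whenever `i` or `j` (0-based) is `≥ r`,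
and the top-left `r × r` block of `M` is Hermitian positive definite. -/
def NSDStruct {k : ℕ} (M : Matrix (Fin k) (Fin k) ℂ) (r : ℕ) : Prop :=
  (∀ i j : Fin k, (r ≤ (i : ℕ) ∨ r ≤ (j : ℕ)) → M i j = 0) ∧
  ∀ h : r ≤ k, (M.submatrix (Fin.castLE h) (Fin.castLE h)).PosDef

section Work
open Matrix MeasureTheory Set intervalIntegral

lemma posSemidef_of_re {k : ℕ} {M : Matrix (Fin k) (Fin k) ℂ} (hM : M.IsHermitian)
    (h : ∀ x : Fin k → ℂ, 0 ≤ (star x ⬝ᵥ (M *ᵥ x)).re) : M.PosSemidef := by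
  refine Matrix.PosSemidef.of_dotProduct_mulVec_nonneg hM fun x => ?_
  have hst : star (star x ⬝ᵥ (M *ᵥ x)) = star x ⬝ᵥ (M *ᵥ x) := by
    calc star (star x ⬝ᵥ (M *ᵥ x)) = star (M *ᵥ x) ⬝ᵥ star (star x) :=
          (Matrix.star_dotProduct_star _ _).symm
      _ = (star x ᵥ* Mᴴ) ⬝ᵥ x := by rw [Matrix.star_mulVec, star_star]
      _ = star x ⬝ᵥ (Mᴴ *ᵥ x) := (Matrix.dotProduct_mulVec _ _ _).symm
      _ = star x ⬝ᵥ (M *ᵥ x) := by rw [hM.eq]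
  rw [Complex.nonneg_iff]
  refine ⟨h x, ?_⟩
  have := congrArg Complex.im hst
  simp only [Complex.star_def, Complex.conj_im] at this
  linarith

end Work

set_option maxHeartbeats 1000000 in
/-- storage functions decrease along input-free trajectories; for a quadratic
storage function `V_Q`, the function `Q^X = X^* Q X` is weakly decreasing (Loewner order). -/
theorem statement6 {n m : ℕ} (I : Set ℝ) (hIopen : IsOpen I) (hIconn : I.OrdConnected)
    (A : ℝ → Matrix (Fin n) (Fin n) ℂ) (B : ℝ → Matrix (Fin n) (Fin m) ℂ)
    (C : ℝ → Matrix (Fin m) (Fin n) ℂ) (D : ℝ → Matrix (Fin m) (Fin m) ℂ)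
    (hLTV : IsLTV I A B C D)
    (V : ℝ → (Fin n → ℂ) → ℝ) (hV : IsStorage I A B C D V)
    (t0 : ℝ) (X : ℝ → Matrix (Fin n) (Fin n) ℂ) (hX : IsFundamental I A t0 X) :
    (∀ x0 : Fin n → ℂ, ∀ r s : ℝ, r ∈ I → s ∈ I → r ≤ s →
        V s (X s *ᵥ x0) ≤ V r (X r *ᵥ x0)) ∧
    ∀ Q : ℝ → Matrix (Fin n) (Fin n) ℂ, (∀ t ∈ I, (Q t).PosSemidef) →
      (∀ t ∈ I, ∀ x : Fin n → ℂ, V t x = quadStorage Q t x) →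
      (∀ t ∈ I, ((X t)ᴴ * Q t * X t).PosSemidef) ∧
      ∀ r s : ℝ, r ∈ I → s ∈ I → r ≤ s →
        LoewnerLE ((X s)ᴴ * Q s * X s) ((X r)ᴴ * Q r * X r) := by
  obtain ⟨hA1, hB2, hC2, hD⟩ := hLTV
  obtain ⟨ht0I, hX0, hXunit, X', hXAC, hXode⟩ := hX
  obtain ⟨hXint, hXeq⟩ := hXAC
  have hIccI : ∀ a b : ℝ, a ∈ I → b ∈ I → Icc a b ⊆ I := fun a b ha hb => hIconn.out ha hb
  -- continuity of entries of X on compact subintervals of I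
  have hXcont : ∀ a b : ℝ, a ∈ I → b ∈ I → a ≤ b → ∀ i j,
      ContinuousOn (fun t => X t i j) (Icc a b) := by
    intro a b ha hb hab i j
    have hint : IntegrableOn (fun t => X' t i j) (Icc a b) := hXint a b ha hb i j
    have hprim : ContinuousOn (fun t => X a i j + ∫ τ in a..t, X' τ i j) (Icc a b) := by
      apply ContinuousOn.add continuousOn_const
      have := intervalIntegral.continuousOn_primitive_interval (μ := volume)
        (f := fun τ => X' τ i j) (a := a) (b := b) (by rwa [Set.uIcc_of_le hab])
      rwa [Set.uIcc_of_le hab] at this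
    refine hprim.congr fun t ht => ?_
    exact hXeq a t ha (hIccI a b ha hb ht) i j
  have key : ∀ x0 : Fin n → ℂ, ∀ r s : ℝ, r ∈ I → s ∈ I → r ≤ s →
      V s (X s *ᵥ x0) ≤ V r (X r *ᵥ x0) := by
    intro x0 r s hr hs hrs
    set x : ℝ → Fin n → ℂ := fun t => X t *ᵥ x0 with hxdef
    set u : ℝ → Fin m → ℂ := fun _ => 0 with hudef
    set y : ℝ → Fin m → ℂ := fun t => C t *ᵥ x t with hydef
    -- x entries are in L^∞ on compact subintervals
    have hxtop : ∀ a b : ℝ, a ∈ I → b ∈ I → ∀ j,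
        MemLp (fun t => x t j) ⊤ (volume.restrict (Icc a b)) := by
      intro a b ha hb j
      rcases le_or_gt a b with hab | hab
      · have hcont : ContinuousOn (fun t => x t j) (Icc a b) := by
          have : ContinuousOn (fun t => ∑ k, X t j k * x0 k) (Icc a b) := by
            apply continuousOn_finset_sum
            intro k _
            exact (hXcont a b ha hb hab j k).mul continuousOn_const
          refine this.congr fun t ht => ?_
          simp [hxdef, Matrix.mulVec, dotProduct]
        obtain ⟨Cb, hCb⟩ := (isCompact_Icc (a := a) (b := b)).exists_bound_of_continuousOn hcont
        refine memLp_top_of_bound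
          (hcont.aestronglyMeasurable measurableSet_Icc) Cb ?_
        rw [ae_restrict_iff' measurableSet_Icc]
        exact Filter.Eventually.of_forall fun t ht => hCb t ht
      · rw [Set.Icc_eq_empty (not_le.mpr hab), Measure.restrict_empty]
        exact ⟨aestronglyMeasurable_zero_measure _, by simp [eLpNorm_measure_zero]⟩
    have hsol : IsSIOSol I A B C D x u y := by
      refine ⟨?_, ?_, ?_, ?_⟩
      · intro a b ha hb i
        exact MemLp.zero'
      · -- y ∈ L²loc
        intro a b ha hb i
        have hterm : ∀ j : Fin n, MemLp ((fun t => C t i j) • (fun t => x t j)) 2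
            (volume.restrict (Icc a b)) := fun j =>
          MemLp.smul (μ := volume.restrict (Icc a b)) (p := 2) (q := ⊤) (r := 2)
            (f := fun t => x t j) (φ := fun t => C t i j)
            (hxtop a b ha hb j) (hC2 a b ha hb i j)
        have hsum : MemLp (fun t => ∑ j, C t i j * x t j) 2 (volume.restrict (Icc a b)) := by
          have := memLp_finsetSum (μ := volume.restrict (Icc a b)) Finset.univ
            (fun j _ => hterm j)
          refine this.ae_eq (Filter.Eventually.of_forall fun t => ?_)
          simp [smul_eq_mul]
        refine hsum.ae_eq (Filter.Eventually.of_forall fun t => ?_)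
        simp [hydef, Matrix.mulVec, dotProduct]
      · refine ⟨fun t => X' t *ᵥ x0, ⟨?_, ?_⟩, ?_⟩
        · intro a b ha hb i
          have : IntegrableOn (fun t => ∑ k, X' t i k * x0 k) (Icc a b) := by
            apply integrable_finset_sum
            intro k _
            exact (hXint a b ha hb i k).mul_const _
          refine this.congr_fun ?_ measurableSet_Icc
          intro t _
          simp [Matrix.mulVec, dotProduct]
        · intro a b ha hb i
          have hmin : min a b ∈ I := by rcases min_choice a b with h | h <;> rw [h] <;> assumption
          have hmax : max a b ∈ I := by rcases max_choice a b with h | h <;> rw [h] <;> assumption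
          have hII : ∀ k, IntervalIntegrable (fun τ => X' τ i k * x0 k) volume a b := by
            intro k
            apply IntegrableOn.intervalIntegrable
            rw [Set.uIcc]
            exact (hXint _ _ hmin hmax i k).mul_const _
          have hint : (∫ τ in a..b, (X' τ *ᵥ x0) i)
              = ∑ k, (∫ τ in a..b, X' τ i k) * x0 k := by
            have h1 : (∫ τ in a..b, (X' τ *ᵥ x0) i)
                = ∫ τ in a..b, ∑ k, X' τ i k * x0 k := by
              apply intervalIntegral.integral_congr
              intro τ _
              simp [Matrix.mulVec, dotProduct]
            rw [h1, intervalIntegral.integral_finset_sum (fun k _ => hII k)]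
            exact Finset.sum_congr rfl fun k _ => by rw [intervalIntegral.integral_mul_const]
          rw [hint]
          have hXab : ∀ k, X b i k = X a i k + ∫ τ in a..b, X' τ i k :=
            fun k => hXeq a b ha hb i k
          simp only [hxdef, Matrix.mulVec, dotProduct]
          calc (fun k => X b i k) ⬝ᵥ x0 = ∑ k, X b i k * x0 k := rfl
            _ = ∑ k, (X a i k + ∫ τ in a..b, X' τ i k) * x0 k :=
                Finset.sum_congr rfl fun k _ => by rw [hXab k]
            _ = ∑ k, X a i k * x0 k + ∑ k, (∫ τ in a..b, X' τ i k) * x0 k := by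
                simp [add_mul, Finset.sum_add_distrib]
            _ = (fun k => X a i k) ⬝ᵥ x0 + ∑ k, (∫ τ in a..b, X' τ i k) * x0 k := rfl
        · filter_upwards [hXode] with t ht htI
          rw [ht htI]
          simp [hxdef, hudef, ← Matrix.mulVec_mulVec]
      · refine Filter.Eventually.of_forall fun t htI => ?_
        simp [hydef, hudef]
    have hsupply : supply u y r s = 0 := by
      simp [supply, hudef]
    have := hV.2.2 x u y hsol r s hr hs hrs
    rw [hsupply] at this
    simpa [hxdef] using by linarith
  refine ⟨key, ?_⟩
  intro Q hQ hVQ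
  have hps : ∀ t ∈ I, ((X t)ᴴ * Q t * X t).PosSemidef :=
    fun t ht => (hQ t ht).conjTranspose_mul_mul_same (X t)
  refine ⟨hps, ?_⟩
  intro r s hr hs hrs
  have hherm : (((X r)ᴴ * Q r * X r) - ((X s)ᴴ * Q s * X s)).IsHermitian :=
    ((hps r hr).1).sub ((hps s hs).1)
  refine posSemidef_of_re hherm fun x0 => ?_
  have h1 := key x0 r s hr hs hrs
  rw [hVQ s hs, hVQ r hr] at h1
  have hform : ∀ t, star (X t *ᵥ x0) ⬝ᵥ (Q t *ᵥ (X t *ᵥ x0))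
      = star x0 ⬝ᵥ (((X t)ᴴ * Q t * X t) *ᵥ x0) := by
    intro t
    simp only [Matrix.star_mulVec, Matrix.dotProduct_mulVec, Matrix.vecMul_vecMul,
      Matrix.mulVec_mulVec, Matrix.mul_assoc]
  simp only [quadStorage, hform] at h1
  have hsub : star x0 ⬝ᵥ ((((X r)ᴴ * Q r * X r) - ((X s)ᴴ * Q s * X s)) *ᵥ x0)
      = star x0 ⬝ᵥ (((X r)ᴴ * Q r * X r) *ᵥ x0)
        - star x0 ⬝ᵥ (((X s)ᴴ * Q s * X s) *ᵥ x0) := by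
    rw [Matrix.sub_mulVec, dotProduct_sub]
  rw [hsub, Complex.sub_re]
  linarith


end Paper
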